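/- arXiv:2503.11338 — 2 statements merged into one kernel-verified Lean document; each statement's English description precedes it below -/
import Mathlib

section
/- Consider a pullback square of categories in which the bottom functor f : D → C admits a fully faithful left adjoint f!. Then the projection functor q : D ×_C E → E (the pullback along g : E → C) admits a fully faithful left adjoint. In particular, the class of right Bousfield localizations (functors admitting a fully faithful left adjoint) is closed under pullback along arbitrary functors. -/
open CategoryTheory

universe v₁ v₂ v₃ u₁ u₂ u₃

variable {C : Type u₁} [Category.{v₁} C] {D : Type u₂} [Category.{v₂} D]
  {E : Type u₃} [Category.{v₃} E]

/-- The (iso-comma) pullback `D ×_C E` of a cospan of categories `f : D ⥤ C ⟵ E : g`. -/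
structure CatPullback (f : D ⥤ C) (g : E ⥤ C) where
  left : D
  right : E
  iso : f.obj left ≅ g.obj right

/-- Morphisms in the pullback of categories. -/
@[ext]
structure CatPullbackHom {f : D ⥤ C} {g : E ⥤ C} (X Y : CatPullback f g) where
  l : X.left ⟶ Y.left
  r : X.right ⟶ Y.right
  w : f.map l ≫ Y.iso.hom = X.iso.hom ≫ g.map r

instance (f : D ⥤ C) (g : E ⥤ C) : Category (CatPullback f g) where
  Hom X Y := CatPullbackHom X Y
  id X := ⟨𝟙 _, 𝟙 _, by simp⟩
  comp {X Y Z} φ ψ := ⟨φ.l ≫ ψ.l, φ.r ≫ ψ.r, by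
    rw [Functor.map_comp, Functor.map_comp, Category.assoc, ψ.w, ← Category.assoc, φ.w,
      Category.assoc]⟩
  id_comp φ := by apply CatPullbackHom.ext <;> simp
  comp_id φ := by apply CatPullbackHom.ext <;> simp
  assoc φ ψ χ := by apply CatPullbackHom.ext <;> simp

/-- The projection `D ×_C E ⥤ E`. -/
def catPullbackSnd (f : D ⥤ C) (g : E ⥤ C) : CatPullback f g ⥤ E where
  obj X := X.right
  map φ := φ.r


@[simp] lemma CatPullbackHom.id_l {f : D ⥤ C} {g : E ⥤ C} (X : CatPullback f g) :
    (𝟙 X : X ⟶ X).l = 𝟙 _ := rfl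
@[simp] lemma CatPullbackHom.id_r {f : D ⥤ C} {g : E ⥤ C} (X : CatPullback f g) :
    (𝟙 X : X ⟶ X).r = 𝟙 _ := rfl
@[simp] lemma CatPullbackHom.comp_l {f : D ⥤ C} {g : E ⥤ C} {X Y Z : CatPullback f g}
    (φ : X ⟶ Y) (ψ : Y ⟶ Z) : (φ ≫ ψ).l = φ.l ≫ ψ.l := rfl
@[simp] lemma CatPullbackHom.comp_r {f : D ⥤ C} {g : E ⥤ C} {X Y Z : CatPullback f g}
    (φ : X ⟶ Y) (ψ : Y ⟶ Z) : (φ ≫ ψ).r = φ.r ≫ ψ.r := rfl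

section Aux

variable (f : D ⥤ C) (g : E ⥤ C) (f' : C ⥤ D) (adj : f' ⊣ f)
  [f'.Full] [f'.Faithful]

/-- The candidate left adjoint of the pullback projection. -/
@[simps]
noncomputable def catPullbackLift : E ⥤ CatPullback f g where
  obj e := ⟨f'.obj (g.obj e), e, (asIso (adj.unit.app (g.obj e))).symm⟩
  map {e e'} φ := ⟨f'.map (g.map φ), φ, by
    have := adj.unit.naturality (g.map φ)
    simp only [Functor.id_map, Functor.comp_map] at this
    simp only [Iso.symm_hom, asIso_inv]
    rw [IsIso.comp_inv_eq, Category.assoc, IsIso.eq_inv_comp]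
    exact this.symm⟩
  map_id e := by apply CatPullbackHom.ext <;> simp
  map_comp φ ψ := by apply CatPullbackHom.ext <;> simp

noncomputable def catPullbackAdj : catPullbackLift f g f' adj ⊣ catPullbackSnd f g :=
  Adjunction.mkOfHomEquiv
    { homEquiv := fun e X =>
        { toFun := fun φ => φ.r
          invFun := fun r =>
            ⟨(adj.homEquiv _ _).symm (g.map r ≫ X.iso.inv), r, by
              have h1 : adj.unit.app (g.obj e) ≫
                  f.map ((adj.homEquiv (g.obj e) X.left).symm (g.map r ≫ X.iso.inv)) =
                  g.map r ≫ X.iso.inv := by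
                have := (adj.homEquiv (g.obj e) X.left).apply_symm_apply (g.map r ≫ X.iso.inv)
                rwa [Adjunction.homEquiv_unit] at this
              simp only [catPullbackLift_obj_iso, Iso.symm_hom, asIso_inv]
              erw [IsIso.eq_inv_comp, ← Category.assoc, h1, Category.assoc, Iso.inv_hom_id,
                Category.comp_id]; rfl⟩
          left_inv := fun φ => by
            apply CatPullbackHom.ext
            · apply (adj.homEquiv _ _).injective
              rw [Equiv.apply_symm_apply]
              erw [Adjunction.homEquiv_unit]
              have := φ.w
              simp only [catPullbackLift_obj_iso, Iso.symm_hom, asIso_inv] at this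
              erw [IsIso.eq_inv_comp] at this
              erw [← this, Category.assoc, Category.assoc, Iso.hom_inv_id, Category.comp_id]
              rfl
            · rfl
          right_inv := fun r => rfl }
      homEquiv_naturality_left_symm := fun {e e' X} φ r => by
        apply CatPullbackHom.ext
        · erw [Equiv.coe_fn_symm_mk]
          dsimp only
          rw [show g.map (φ ≫ r) ≫ X.iso.inv = g.map φ ≫ (g.map r ≫ X.iso.inv) by
            simp [Category.assoc]; exact Category.assoc _ _ _]
          rw [Adjunction.homEquiv_naturality_left_symm]
          rfl
        · rfl
      homEquiv_naturality_right := fun {e X X'} φ ψ => rfl }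

end Aux

/-- If `f : D ⥤ C` admits a fully faithful left adjoint, then so does the pullback
projection `q : D ×_C E ⥤ E`, for any `g : E ⥤ C`: right Bousfield localizations are
closed under pullback. -/
theorem catPullback_rightBousfield (f : D ⥤ C) (g : E ⥤ C)
    (f' : C ⥤ D) (adj : f' ⊣ f) (hfull : f'.Full) (hfaithful : f'.Faithful) :
    ∃ h : E ⥤ CatPullback f g,
      Nonempty (h ⊣ catPullbackSnd f g) ∧ h.Full ∧ h.Faithful := by
  haveI := hfull; haveI := hfaithful
  refine ⟨catPullbackLift f g f' adj, ⟨catPullbackAdj f g f' adj⟩, ?_, ?_⟩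
  · constructor
    intro e e' ψ
    refine ⟨ψ.r, ?_⟩
    apply CatPullbackHom.ext
    · show f'.map (g.map ψ.r) = ψ.l
      apply (adj.homEquiv _ _).injective
      erw [Adjunction.homEquiv_unit, Adjunction.homEquiv_unit]
      have w := ψ.w
      simp only [catPullbackLift_obj_iso, Iso.symm_hom, asIso_inv] at w
      erw [IsIso.comp_inv_eq, Category.assoc, IsIso.eq_inv_comp] at w
      have nat := adj.unit.naturality (g.map ψ.r)
      simp only [Functor.id_map, Functor.comp_map] at nat
      exact nat.symm.trans w.symm
    · rfl
  · constructor
    intro e e' φ ψ hh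
    have := congrArg CatPullbackHom.r hh
    exact this
end

section
/- Let D be a category with filtered colimits, κ a regular uncountable cardinal, and d a κ-compact object of D. Let J be a κ-filtered category admitting colimits of countable chains, and d• : J → D a diagram of κ-compact objects which preserves countable chain colimits and has colimit d. Then there exists j ∈ J with d_j ≅ d. (Key combinatorial content: construct a countable chain j₀ ≤ j₁ ≤ ... in J such that each transition map d_{j_n} → d_{j_{n+1}} factors through d compatibly, and conclude colim_n d_{j_n} ≅ d.) -/
open CategoryTheory Limits Cardinal

universe v u

/-- A category is `κ`-filtered if every `κ`-small diagram in it admits a cocone. -/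
def IsCardinalFiltered (J : Type v) [Category.{v} J] (κ : Cardinal.{v}) : Prop :=
  ∀ (A : Type v) [SmallCategory A], #(Σ (a : A) (b : A), a ⟶ b) < κ →
    ∀ F : A ⥤ J, Nonempty (Cocone F)

/-- An object `d` is `κ`-compact if `Hom(d, −)` preserves `κ`-filtered colimits,
expressed elementarily. -/
def IsCardinalCompact {D : Type u} [Category.{v} D] (κ : Cardinal.{v}) (d : D) : Prop :=
  ∀ (J : Type v) [SmallCategory J], IsCardinalFiltered J κ →
    ∀ (G : J ⥤ D) (c : Cocone G), Nonempty (IsColimit c) →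
      (∀ φ : d ⟶ c.pt, ∃ (j : J) (ψ : d ⟶ G.obj j), ψ ≫ c.ι.app j = φ) ∧
      (∀ (j : J) (ψ ψ' : d ⟶ G.obj j), ψ ≫ c.ι.app j = ψ' ≫ c.ι.app j →
        ∃ (k : J) (h : j ⟶ k), ψ ≫ G.map h = ψ' ≫ G.map h)

/-- If a `κ`-compact object `d` is the colimit of a `κ`-filtered diagram of `κ`-compact
objects which preserves colimits of countable chains (indexed by a category with colimits of
countable chains), then `d` is isomorphic to one of the stages. -/
theorem exists_stage_iso_of_kappa_compact_colimit
    {D : Type u} [Category.{v} D] {κ : Cardinal.{v}}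
    (hreg : κ.IsRegular) (huncount : ℵ₀ < κ)
    (J : Type v) [SmallCategory J] (hJ : IsCardinalFiltered J κ)
    [HasColimitsOfShape ℕ J]
    (F : J ⥤ D) (hcpt : ∀ j : J, IsCardinalCompact κ (F.obj j))
    [PreservesColimitsOfShape ℕ F]
    (c : Cocone F) (hc : IsColimit c) (hd : IsCardinalCompact κ c.pt) :
    ∃ j : J, Nonempty (F.obj j ≅ c.pt) := by
  classical
  -- Step 0: factor the identity of `c.pt` through some stage.
  obtain ⟨j₀, ψ₀, hψ₀⟩ := (hd J hJ F c ⟨hc⟩).1 (𝟙 c.pt)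
  -- The type of "stages with a section".
  -- Step function using compactness of the stages.
  have step : ∀ s : Σ' (j : J) (φ : c.pt ⟶ F.obj j), φ ≫ c.ι.app j = 𝟙 c.pt,
      ∃ (s' : Σ' (j : J) (φ : c.pt ⟶ F.obj j), φ ≫ c.ι.app j = 𝟙 c.pt)
        (t : s.1 ⟶ s'.1), s'.2.1 = s.2.1 ≫ F.map t ∧ c.ι.app s.1 ≫ s'.2.1 = F.map t := by
    rintro ⟨j, φ, hφ⟩
    have heq : (c.ι.app j ≫ φ) ≫ c.ι.app j = 𝟙 (F.obj j) ≫ c.ι.app j := by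
      simp [hφ]
    obtain ⟨k, t, ht⟩ := (hcpt j J hJ F c ⟨hc⟩).2 j (c.ι.app j ≫ φ) (𝟙 (F.obj j)) heq
    refine ⟨⟨k, φ ≫ F.map t, ?_⟩, t, rfl, ?_⟩
    · rw [Category.assoc, c.w t, hφ]
    · simpa using ht
  -- The chain.
  let seq : ℕ → Σ' (j : J) (φ : c.pt ⟶ F.obj j), φ ≫ c.ι.app j = 𝟙 c.pt :=
    fun n => Nat.rec ⟨j₀, ψ₀, hψ₀⟩ (fun _ s => (step s).choose) n
  let tr : ∀ n : ℕ, (seq n).1 ⟶ (seq (n + 1)).1 :=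
    fun n => (step (seq n)).choose_spec.choose
  have htr1 : ∀ n, (seq (n + 1)).2.1 = (seq n).2.1 ≫ F.map (tr n) :=
    fun n => (step (seq n)).choose_spec.choose_spec.1
  have htr2 : ∀ n, c.ι.app (seq n).1 ≫ (seq (n + 1)).2.1 = F.map (tr n) :=
    fun n => (step (seq n)).choose_spec.choose_spec.2
  -- The chain as a functor and its colimit in `J`.
  let G : ℕ ⥤ J := Functor.ofSequence tr
  let σ : ∀ n : ℕ, G.obj n ⟶ colimit G := fun n => colimit.ι G n
  have hGmap : ∀ n : ℕ, G.map (homOfLE (Nat.le_succ n)) = tr n :=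
    fun n => Functor.ofSequence_map_homOfLE_succ tr n
  -- `F` preserves the colimit of the chain.
  have hFc : IsColimit (F.mapCocone (colimit.cocone G)) :=
    isColimitOfPreserves F (colimit.isColimit G)
  refine ⟨colimit G, ⟨?_⟩⟩
  -- The two maps.
  let u : F.obj (colimit G) ⟶ c.pt := c.ι.app (colimit G)
  let φ : ∀ n : ℕ, c.pt ⟶ F.obj (G.obj n) := fun n => (seq n).2.1
  let v : c.pt ⟶ F.obj (colimit G) := φ 0 ≫ F.map (σ 0)
  -- `v` is independent of the stage used.
  have hv : ∀ n : ℕ, v = φ n ≫ F.map (σ n) := by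
    intro n
    induction n with
    | zero => rfl
    | succ n ih =>
      rw [ih]
      have : σ n = G.map (homOfLE (Nat.le_succ n)) ≫ σ (n + 1) := by
        simp [σ, colimit.w]
      rw [this, F.map_comp]
      erw [hGmap n]
      have : φ (n + 1) = φ n ≫ F.map (tr n) := htr1 n
      rw [this]
      erw [Category.assoc]
      rfl
  have huv : v ≫ u = 𝟙 c.pt := by
    have : F.map (σ 0) ≫ c.ι.app (colimit G) = c.ι.app (G.obj 0) := c.w (σ 0)
    simp only [u, v, Category.assoc, this]
    exact (seq 0).2.2
  have hvu : u ≫ v = 𝟙 (F.obj (colimit G)) := by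
    apply hFc.hom_ext
    intro n
    show F.map (σ n) ≫ u ≫ v = F.map (σ n) ≫ 𝟙 _
    have h2 : F.map (σ n) ≫ u = c.ι.app (G.obj n) := c.w (σ n)
    have h3 : c.ι.app (G.obj n) ≫ φ (n + 1) = F.map (tr n) := htr2 n
    rw [Category.comp_id, ← Category.assoc, h2, hv (n + 1), ← Category.assoc, h3]
    erw [← F.map_comp]
    congr 1
    rw [← hGmap n]
    exact colimit.w G (homOfLE (Nat.le_succ n))
  exact ⟨u, v, hvu, huv⟩
end
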